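/- For any superbubble ⟨s, t⟩ in a directed acyclic graph G with a single source and single sink, there exists a parent p of t (i.e., an edge (p, t) ∈ E) such that p has exactly one child, namely t. -/

import Mathlib

/-- `v` is reachable from `s` by a directed path whose internal vertices
(all vertices except the endpoints) avoid `avoid`. -/
def ReachWithout {V : Type*} (E : V → V → Prop) (avoid s v : V) : Prop :=
  s = v ∨ ∃ w, Relation.ReflTransGen (fun a b => E a b ∧ b ≠ avoid) s w ∧ E w v

/-- `t` is reachable from `v` by a directed path whose internal vertices avoid `avoid`. -/
def CoReachWithout {V : Type*} (E : V → V → Prop) (avoid v t : V) : Prop :=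
  v = t ∨ ∃ w, E v w ∧ Relation.ReflTransGen (fun a b => E a b ∧ a ≠ avoid) w t

/-- The subgraph induced by `U` is acyclic. -/
def AcyclicOn {V : Type*} (E : V → V → Prop) (U : Set V) : Prop :=
  ∀ v, ¬ Relation.TransGen (fun a b => E a b ∧ a ∈ U ∧ b ∈ U) v v

/-- The directed graph is acyclic. -/
def Acyclic {V : Type*} (E : V → V → Prop) : Prop :=
  ∀ v, ¬ Relation.TransGen E v v

/-- The reachability, matching and acyclicity conditions of a superbubble
(Definition 1, without minimality). -/
def SBCore {V : Type*} (E : V → V → Prop) (s t : V) : Prop :=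
  s ≠ t ∧ Relation.TransGen E s t ∧
  (∀ v, ReachWithout E t s v ↔ CoReachWithout E s v t) ∧
  AcyclicOn E {v | ReachWithout E t s v}

/-- `⟨s, t⟩` is a superbubble: reachability, matching, acyclicity and minimality. -/
def Superbubble {V : Type*} (E : V → V → Prop) (s t : V) : Prop :=
  SBCore E s t ∧ ∀ t', ReachWithout E t s t' → t' ≠ t → ¬ SBCore E s t'

/-- For any superbubble ⟨s, t⟩ in a DAG with a single source and single sink,
there is a parent p of t whose only child is t. -/
theorem exit_has_parent_with_unique_child {V : Type*} [Fintype V] (E : V → V → Prop)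
    (hA : Acyclic E)
    (hSource : ∃! r : V, ∀ u, ¬ E u r)
    (hSink : ∃! q : V, ∀ u, ¬ E q u)
    (s t : V) (hSB : Superbubble E s t) :
    ∃ p, E p t ∧ ∀ u, E p u → u = t := by
  obtain ⟨⟨hst, hreach, hM, hAc⟩, _⟩ := hSB
  set U : Set V := {v | ReachWithout E t s v} with hU
  -- children of vertices of U \ {t} stay in U
  have child_in_U : ∀ p, p ∈ U → p ≠ t → ∀ u, E p u → u ∈ U := by
    intro p hp hpt u hpu
    rcases hp with hsp | ⟨w, hw, hwp⟩
    · exact Or.inr ⟨p, by rw [← hsp], hpu⟩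
    · exact Or.inr ⟨p, hw.tail ⟨hwp, hpt⟩, hpu⟩
  have hsU : s ∈ U := Or.inl rfl
  -- the restricted relation
  set R : V → V → Prop := fun a b => E a b ∧ (a ∈ U ∧ a ≠ t) ∧ (b ∈ U ∧ b ≠ t) with hR
  have hRsub : ∀ a b, Relation.TransGen R a b →
      Relation.TransGen (fun a b => E a b ∧ a ∈ U ∧ b ∈ U) a b := by
    intro a b h
    exact Relation.TransGen.mono (fun x y (hxy : R x y) => (⟨hxy.1, hxy.2.1.1, hxy.2.2.1⟩ : E x y ∧ x ∈ U ∧ y ∈ U)) a b h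
  have hirr : ∀ v, ¬ Relation.TransGen R v v := fun v h => hAc v (hRsub v v h)
  have hwf : WellFounded (fun a b => Relation.TransGen R b a) := by
    have : IsIrrefl V (fun a b => Relation.TransGen R b a) := ⟨fun v h => hirr v h⟩
    have : IsTrans V (fun a b => Relation.TransGen R b a) :=
      ⟨fun a b c h1 h2 => Relation.TransGen.trans h2 h1⟩
    exact Finite.wellFounded_of_trans_of_irrefl _
  -- pick a maximal element of U \ {t}
  have hne : (U \ {t}).Nonempty := ⟨s, hsU, hst⟩
  obtain ⟨p, hpU, hpmax⟩ : ∃ p ∈ U \ {t}, ∀ x ∈ U \ {t}, ¬ Relation.TransGen R p x := by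
    refine ⟨hwf.min (U \ {t}) hne, hwf.min_mem _ hne, fun x hx h => ?_⟩
    exact hwf.not_lt_min (U \ {t}) hx h
  have hpt : p ≠ t := hpU.2
  have hchild : ∀ u, E p u → u = t := by
    intro u hpu
    by_contra hut
    have huU : u ∈ U := child_in_U p hpU.1 hpt u hpu
    exact hpmax u ⟨huU, hut⟩ (Relation.TransGen.single ⟨hpu, ⟨hpU.1, hpt⟩, ⟨huU, hut⟩⟩)
  rcases (hM p).1 hpU.1 with h | ⟨w, hpw, _⟩
  · exact absurd h hpt
  · exact ⟨p, (hchild w hpw) ▸ hpw, hchild⟩
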